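/- Fix a depth m ≥ 1. For all κ, κ̂, M, c with 0 < κ < 1, κ̂ > 0, M > 0, c > 0, there exists a constant C = C(m, κ, κ̂, M, c) > 0 with the following property. Let X be a real Hilbert space, g : X → X twice continuously Fréchet differentiable with ‖g′(y; u)‖ ≤ κ‖u‖ and ‖g″(y; u, v)‖ ≤ κ̂‖u‖‖v‖ for all y, u, v, and a κ-contraction. Let (x_k) be any sequence generated by Anderson acceleration of depth m with damping factors 0 < β_k ≤ 1 (i.e., at each step k the coefficients (α^k_{k−m−1}, …, α^k_{k−1}) minimize ‖Σ_{j=k−m−1}^{k−1} α_j w_{j+1}‖ subject to Σ_j α_j = 1, and x_k = (1 − β_{k−1}) Σ_j α^k_j x_j + β_{k−1} Σ_j α^k_j g(x_j)), with residuals w_n := g(x_{n−1}) − x_{n−1} all nonzero and consecutive residual differences nonzero. If at step k the optimization coefficients at levels k and k+1 are all bounded in absolute value by M, and |α^k_{k−1}| ≥ c, |α^{k+1}_k| ≥ c, and |1 − α^k_{k−m−1}| ≥ c, then ‖w_{k+1}‖ ≤ θ_k ( (1 − β_{k−1}) + κ β_{k−1} ) ‖w_k‖ + C Σ_{j=0}^{m}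 ‖w_{k−j}‖², where θ_k := ‖Σ_{j=k−m−1}^{k−1} α^k_j w_{j+1}‖ / ‖w_k‖ is the stage-k optimization gain. -/

import Mathlib

set_option maxHeartbeats 1000000 in
/-- Proposition (convergence of the residual with general depth `m ≥ 1`).
For all `κ, κ̂, M, c` with `0 < κ < 1`, `κ̂, M, c > 0` there is a constant
`C = C(m, κ, κ̂, M, c) > 0` such that for any Anderson(m)-generated sequence (for a `C²`,
contractive `g` with `‖g'‖ ≤ κ`, `‖g''‖ ≤ κ̂`) whose optimization coefficients at levels
`k` and `k+1` are bounded by `M`, with `|α^k_{k-1}|, |α^{k+1}_k|, |1 - α^k_{k-m-1}| ≥ c`,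
`‖w_{k+1}‖ ≤ θ_k ((1-β_{k-1}) + κ β_{k-1}) ‖w_k‖ + C Σ_{j=0}^{m} ‖w_{k-j}‖²`. -/
theorem stmt_19 (m : ℕ) (hm : 1 ≤ m) (κ κh M c : ℝ) (hκ0 : 0 < κ) (hκ1 : κ < 1)
    (hκh : 0 < κh) (hM : 0 < M) (hc : 0 < c) :
    ∃ C : ℝ, 0 < C ∧
      ∀ (X : Type) [NormedAddCommGroup X] [InnerProductSpace ℝ X] [CompleteSpace X],
      ∀ g : X → X,
        ContDiff ℝ 2 g →
        (∀ y u : X, ‖fderiv ℝ g y u‖ ≤ κ * ‖u‖) →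
        (∀ y u v : X, ‖fderiv ℝ (fderiv ℝ g) y u v‖ ≤ κh * ‖u‖ * ‖v‖) →
        (∀ x y : X, ‖g y - g x‖ ≤ κ * ‖x - y‖) →
        ∀ (x w : ℤ → X) (α : ℤ → ℤ → ℝ) (β : ℤ → ℝ),
        (∀ n, w n = g (x (n - 1)) - x (n - 1)) →
        (∀ i, 0 < β i ∧ β i ≤ 1) →
        (∀ i, ∑ j ∈ Finset.Icc (i - (m : ℤ) - 1) (i - 1), α i j = 1) →
        (∀ (i : ℤ) (b : ℤ → ℝ), ∑ j ∈ Finset.Icc (i - (m : ℤ) - 1) (i - 1), b j = 1 →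
          ‖∑ j ∈ Finset.Icc (i - (m : ℤ) - 1) (i - 1), α i j • w (j + 1)‖ ≤
            ‖∑ j ∈ Finset.Icc (i - (m : ℤ) - 1) (i - 1), b j • w (j + 1)‖) →
        (∀ i, x i =
          (1 - β (i - 1)) • ∑ j ∈ Finset.Icc (i - (m : ℤ) - 1) (i - 1), α i j • x j +
          β (i - 1) • ∑ j ∈ Finset.Icc (i - (m : ℤ) - 1) (i - 1), α i j • g (x j)) →
        (∀ n, w n ≠ 0) →
        (∀ n, w n ≠ w (n - 1)) →
        ∀ k : ℤ,
        (∀ j ∈ Finset.Icc (k - (m : ℤ) - 1) (k - 1), |α k j| ≤ M) →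
        (∀ j ∈ Finset.Icc (k - (m : ℤ)) k, |α (k + 1) j| ≤ M) →
        c ≤ |α k (k - 1)| →
        c ≤ |α (k + 1) k| →
        c ≤ |1 - α k (k - (m : ℤ) - 1)| →
        ‖w (k + 1)‖ ≤
          (‖∑ j ∈ Finset.Icc (k - (m : ℤ) - 1) (k - 1), α k j • w (j + 1)‖ / ‖w k‖) *
            ((1 - β (k - 1)) + κ * β (k - 1)) * ‖w k‖ +
          C * ∑ j ∈ Finset.range (m + 1), ‖w (k - (j : ℤ))‖ ^ 2 := by
  have h1κ : (0:ℝ) < 1 - κ := by linarith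
  refine ⟨κh * ((m:ℝ)+1)^2 * M * (1 + (2*(m:ℝ)/(1-κ))*(1 + ((m:ℝ)+1)*M))^2, ?_, ?_⟩
  · have hA0 : (0:ℝ) < 1 + (2*(m:ℝ)/(1-κ))*(1 + ((m:ℝ)+1)*M) := by
      have h1 : (0:ℝ) ≤ (2*(m:ℝ)/(1-κ))*(1 + ((m:ℝ)+1)*M) := by
        apply mul_nonneg (div_nonneg (by positivity) h1κ.le) (by positivity)
      linarith
    have : (0:ℝ) < ((m:ℝ)+1)^2 := by positivity
    positivity
  intro X _ _ _ g hg hg1 hg2 hcon x w α β hw hβ hαsum hopt hx hw0 hwne k hMk hMk1 hc1 hc2 hc3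
  set A : ℝ := 1 + (2*(m:ℝ)/(1-κ))*(1 + ((m:ℝ)+1)*M) with hAdef
  have hA0 : (0:ℝ) < A := by
    have h1 : (0:ℝ) ≤ (2*(m:ℝ)/(1-κ))*(1 + ((m:ℝ)+1)*M) := by
      apply mul_nonneg (div_nonneg (by positivity) h1κ.le) (by positivity)
    rw [hAdef]; linarith
  set I := Finset.Icc (k - (m : ℤ) - 1) (k - 1) with hI
  set W := ∑ j ∈ I, α k j • w (j + 1) with hWdef
  set Sx := ∑ j ∈ I, α k j • x j with hSxdef
  set Sg := ∑ j ∈ I, α k j • g (x j) with hSgdef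
  set β' := β (k - 1) with hβ'def
  set S := ∑ j ∈ Finset.range (m + 1), ‖w (k - (j : ℤ))‖ with hSdef
  set Q := ∑ j ∈ Finset.range (m + 1), ‖w (k - (j : ℤ))‖ ^ 2 with hQdef
  -- basic facts
  have hwj : ∀ j : ℤ, w (j + 1) = g (x j) - x j := by
    intro j; have := hw (j + 1); simpa using this
  have hsum1 : ∑ j ∈ I, α k j = 1 := hαsum k
  have hxk : x k = (1 - β') • Sx + β' • Sg := hx k
  have hβk := hβ (k - 1)
  have hβ1 : 0 < β' := hβk.1
  have hβ2 : β' ≤ 1 := hβk.2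
  have hW_eq : W = Sg - Sx := by
    rw [hWdef, hSgdef, hSxdef, ← Finset.sum_sub_distrib]
    exact Finset.sum_congr rfl fun j _ => by rw [hwj j, smul_sub]
  have hk1I : (k - 1) ∈ I := by
    rw [hI, Finset.mem_Icc]; omega
  have hWle : ‖W‖ ≤ ‖w k‖ := by
    have hb : ∑ j ∈ I, (if j = k - 1 then (1:ℝ) else 0) = 1 := by
      rw [Finset.sum_ite_eq' I (k-1) (fun _ => (1:ℝ))]
      simp [hk1I]
    have := hopt k (fun j => if j = k - 1 then (1:ℝ) else 0) hb
    have hrhs : ∑ j ∈ I, (if j = k - 1 then (1:ℝ) else 0) • w (j + 1) = w k := by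
      simp only [ite_smul, one_smul, zero_smul]
      rw [Finset.sum_ite_eq' I (k-1) (fun j => w (j + 1))]
      simp only [hk1I, if_true]
      congr 1; omega
    rw [hrhs] at this
    exact this
  -- derivative facts
  have hgd : Differentiable ℝ g := hg.differentiable (by norm_num)
  have hfd : Differentiable ℝ (fderiv ℝ g) :=
    (hg.fderiv_right (m := 1) (by norm_num)).differentiable (by norm_num)
  have hop2 : ∀ y : X, ‖fderiv ℝ (fderiv ℝ g) y‖ ≤ κh := by
    intro y
    refine ContinuousLinearMap.opNorm_le_bound _ hκh.le fun u => ?_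
    refine ContinuousLinearMap.opNorm_le_bound _ (by positivity) fun v => ?_
    exact hg2 y u v
  have hlip : ∀ p q : X, ‖fderiv ℝ g q - fderiv ℝ g p‖ ≤ κh * ‖q - p‖ := by
    intro p q
    exact convex_univ.norm_image_sub_le_of_norm_fderiv_le
      (fun z _ => hfd z) (fun z _ => hop2 z) (Set.mem_univ p) (Set.mem_univ q)
  have hTay : ∀ a : X,
      ‖g a - g (x k) - (fderiv ℝ g (x k)) (a - x k)‖ ≤ κh * ‖a - x k‖ ^ 2 := by
    intro a
    have hseg : ∀ z ∈ segment ℝ (x k) a, ‖z - x k‖ ≤ ‖a - x k‖ := by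
      intro z hz
      rw [segment_eq_image'] at hz
      obtain ⟨t, ht, rfl⟩ := hz
      simp only [add_sub_cancel_left]
      rw [norm_smul, Real.norm_eq_abs, abs_of_nonneg ht.1]
      exact mul_le_of_le_one_left (norm_nonneg _) ht.2
    have hmain := Convex.norm_image_sub_le_of_norm_hasFDerivWithin_le'
      (f := g) (f' := fun z => fderiv ℝ g z) (φ := fderiv ℝ g (x k))
      (s := segment ℝ (x k) a) (C := κh * ‖a - x k‖)
      (fun z _ => (hgd z).hasFDerivAt.hasFDerivWithinAt)
      (fun z hz => le_trans (hlip (x k) z)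
        (mul_le_mul_of_nonneg_left (hseg z hz) hκh.le))
      (convex_segment _ _) (left_mem_segment ℝ _ _) (right_mem_segment ℝ _ _)
    calc ‖g a - g (x k) - (fderiv ℝ g (x k)) (a - x k)‖
        ≤ κh * ‖a - x k‖ * ‖a - x k‖ := hmain
      _ = κh * ‖a - x k‖ ^ 2 := by ring
  -- consecutive differences
  have hcons : ∀ l : ℤ, ‖x l - x (l - 1)‖ ≤ (‖w (l + 1)‖ + ‖w l‖) / (1 - κ) := by
    intro l
    have h3 : x l - x (l - 1) = (g (x l) - g (x (l - 1))) - w (l + 1) + w l := by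
      rw [hwj l, hw l]; abel
    have h5 : ‖g (x l) - g (x (l - 1))‖ ≤ κ * ‖x l - x (l - 1)‖ := by
      have := hcon (x (l - 1)) (x l)
      rwa [norm_sub_rev (x (l-1))] at this
    have h4 : ‖x l - x (l - 1)‖ ≤ κ * ‖x l - x (l - 1)‖ + (‖w (l + 1)‖ + ‖w l‖) := by
      calc ‖x l - x (l - 1)‖ = ‖(g (x l) - g (x (l - 1))) - w (l + 1) + w l‖ := by rw [h3]
        _ ≤ ‖(g (x l) - g (x (l - 1))) - w (l + 1)‖ + ‖w l‖ := norm_add_le _ _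
        _ ≤ ‖g (x l) - g (x (l - 1))‖ + ‖w (l + 1)‖ + ‖w l‖ := by
            have := norm_sub_le (g (x l) - g (x (l - 1))) (w (l + 1))
            linarith
        _ ≤ κ * ‖x l - x (l - 1)‖ + (‖w (l + 1)‖ + ‖w l‖) := by linarith
    rw [le_div_iff₀ h1κ]
    nlinarith [norm_nonneg (x l - x (l - 1))]
  have hwS : ∀ i : ℕ, i ≤ m → ‖w (k - (i : ℤ))‖ ≤ S := by
    intro i hi
    exact Finset.single_le_sum (f := fun j : ℕ => ‖w (k - (j : ℤ))‖)
      (fun j _ => norm_nonneg _) (Finset.mem_range.mpr (by omega))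
  have hS0 : 0 ≤ S := by
    rw [hSdef]; exact Finset.sum_nonneg fun j _ => norm_nonneg _
  have hDnn : (0:ℝ) ≤ 2 * S / (1 - κ) := div_nonneg (by linarith) h1κ.le
  have hchain : ∀ i : ℕ, i ≤ m → ‖x (k - 1 - (i : ℤ)) - x (k - 1)‖ ≤ i * (2 * S / (1 - κ)) := by
    intro i
    induction i with
    | zero => intro _; simp
    | succ i ih =>
      intro hi
      have hi' : i ≤ m := by omega
      have step : ‖x (k - 1 - ((i : ℤ) + 1)) - x (k - 1 - (i : ℤ))‖ ≤ 2 * S / (1 - κ) := by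
        have e1 : k - 1 - ((i : ℤ) + 1) = (k - 1 - (i : ℤ)) - 1 := by ring
        rw [e1, norm_sub_rev]
        refine le_trans (hcons (k - 1 - (i : ℤ))) ?_
        have ea : k - 1 - (i : ℤ) + 1 = k - ((i : ℕ) : ℤ) := by push_cast; ring
        have eb : k - 1 - (i : ℤ) = k - (((i + 1 : ℕ)) : ℤ) := by push_cast; ring
        rw [ea, eb]
        have b1 := hwS i hi'
        have b2 := hwS (i + 1) hi
        rw [div_le_div_iff₀ h1κ h1κ]
        nlinarith
      calc ‖x (k - 1 - ((i + 1 : ℕ) : ℤ)) - x (k - 1)‖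
          = ‖(x (k - 1 - ((i : ℤ) + 1)) - x (k - 1 - (i : ℤ))) + (x (k - 1 - (i : ℤ)) - x (k - 1))‖ := by
            push_cast; rw [sub_add_sub_cancel]
        _ ≤ ‖x (k - 1 - ((i : ℤ) + 1)) - x (k - 1 - (i : ℤ))‖ + ‖x (k - 1 - (i : ℤ)) - x (k - 1)‖ :=
            norm_add_le _ _
        _ ≤ 2 * S / (1 - κ) + i * (2 * S / (1 - κ)) := add_le_add step (ih hi')
        _ = ((i + 1 : ℕ) : ℝ) * (2 * S / (1 - κ)) := by push_cast; ring
  have hdiffk1 : ∀ j ∈ I, ‖x j - x (k - 1)‖ ≤ (m : ℝ) * (2 * S / (1 - κ)) := by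
    intro j hj
    rw [hI, Finset.mem_Icc] at hj
    set i := (k - 1 - j).toNat with hidef
    have hi1 : (i : ℤ) = k - 1 - j := by omega
    have him : i ≤ m := by omega
    have := hchain i him
    rw [show k - 1 - (i : ℤ) = j by omega] at this
    refine le_trans this ?_
    exact mul_le_mul_of_nonneg_right (by exact_mod_cast him) hDnn
  have esub : ∀ z : X, ∑ j ∈ I, α k j • (x j - z) = Sx - z := by
    intro z
    simp only [smul_sub]
    rw [Finset.sum_sub_distrib, ← Finset.sum_smul, hsum1, one_smul, hSxdef]
  -- bound on ‖x k - x (k-1)‖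
  have hcard : (I.card : ℝ) = (m : ℝ) + 1 := by
    rw [hI, Int.card_Icc]
    have : (k - 1 + 1 - (k - (m : ℤ) - 1)).toNat = m + 1 := by omega
    rw [this]; push_cast; ring
  have hid3 : x k - x (k - 1) = β' • W + ∑ j ∈ I, α k j • (x j - x (k - 1)) := by
    rw [esub (x (k - 1)), hxk, hW_eq]; module
  have hxkk1 : ‖x k - x (k - 1)‖ ≤ S + ((m : ℝ) + 1) * M * ((m : ℝ) * (2 * S / (1 - κ))) := by
    rw [hid3]
    have t1 : ‖β' • W‖ ≤ S := by
      rw [norm_smul, Real.norm_eq_abs, abs_of_nonneg hβ1.le]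
      have h1 : ‖w (k - ((0:ℕ) : ℤ))‖ ≤ S := hwS 0 (by omega)
      simp only [Nat.cast_zero, sub_zero] at h1
      have h2 : β' * ‖W‖ ≤ 1 * ‖W‖ := mul_le_mul_of_nonneg_right hβ2 (norm_nonneg _)
      rw [one_mul] at h2
      linarith
    have t2 : ‖∑ j ∈ I, α k j • (x j - x (k - 1))‖ ≤ ((m : ℝ) + 1) * M * ((m : ℝ) * (2 * S / (1 - κ))) := by
      refine le_trans (norm_sum_le _ _) ?_
      have : ∀ j ∈ I, ‖α k j • (x j - x (k - 1))‖ ≤ M * ((m : ℝ) * (2 * S / (1 - κ))) := by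
        intro j hj
        rw [norm_smul, Real.norm_eq_abs]
        exact mul_le_mul (hMk j hj) (hdiffk1 j hj) (norm_nonneg _) hM.le
      refine le_trans (Finset.sum_le_sum this) ?_
      rw [Finset.sum_const, nsmul_eq_mul, hcard]
      ring_nf; rfl
    calc ‖β' • W + ∑ j ∈ I, α k j • (x j - x (k - 1))‖
        ≤ ‖β' • W‖ + ‖∑ j ∈ I, α k j • (x j - x (k - 1))‖ := norm_add_le _ _
      _ ≤ S + ((m : ℝ) + 1) * M * ((m : ℝ) * (2 * S / (1 - κ))) := add_le_add t1 t2
  have hdiffk : ∀ j ∈ I, ‖x j - x k‖ ≤ A * S := by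
    intro j hj
    have t1 : ‖x j - x k‖ ≤ ‖x j - x (k - 1)‖ + ‖x (k - 1) - x k‖ := by
      have : x j - x k = (x j - x (k - 1)) + (x (k - 1) - x k) := by abel
      rw [this]; exact norm_add_le _ _
    have t2 : ‖x (k - 1) - x k‖ = ‖x k - x (k - 1)‖ := norm_sub_rev _ _
    have hAS : (m : ℝ) * (2 * S / (1 - κ)) + (S + ((m : ℝ) + 1) * M * ((m : ℝ) * (2 * S / (1 - κ)))) = A * S := by
      rw [hAdef]; field_simp; ring
    rw [← hAS]
    have := hdiffk1 j hj
    linarith [hxkk1, t2.le, t2.ge]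
  -- main identities
  have hid1 : w (k + 1) = (1 - β') • W + (g (x k) - Sg) := by
    rw [hwj k, hW_eq, hxk]; module
  have e1a : ∑ j ∈ I, α k j • (fderiv ℝ g (x k)) (x j - x k) = (fderiv ℝ g (x k)) (Sx - x k) := by
    calc ∑ j ∈ I, α k j • (fderiv ℝ g (x k)) (x j - x k)
        = (fderiv ℝ g (x k)) (∑ j ∈ I, α k j • (x j - x k)) := by
          rw [map_sum]
          exact Finset.sum_congr rfl fun j _ => ((fderiv ℝ g (x k)).map_smul _ _).symm
      _ = (fderiv ℝ g (x k)) (Sx - x k) := by rw [esub (x k)]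
  have e1 : ∑ j ∈ I, α k j • (g (x j) - g (x k) - (fderiv ℝ g (x k)) (x j - x k))
      = Sg - g (x k) - (fderiv ℝ g (x k)) (Sx - x k) := by
    simp only [smul_sub]
    rw [Finset.sum_sub_distrib, Finset.sum_sub_distrib, ← Finset.sum_smul, hsum1, one_smul, e1a,
      hSgdef]
  have e2 : Sx - x k = -(β' • W) := by rw [hxk, hW_eq]; module
  have hid2 : g (x k) - Sg = β' • (fderiv ℝ g (x k)) W
      - ∑ j ∈ I, α k j • (g (x j) - g (x k) - (fderiv ℝ g (x k)) (x j - x k)) := by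
    rw [e1, e2, map_neg, (fderiv ℝ g (x k)).map_smul]
    abel
  -- norm estimates
  have hsumR : ‖∑ j ∈ I, α k j • (g (x j) - g (x k) - (fderiv ℝ g (x k)) (x j - x k))‖
      ≤ ((m : ℝ) + 1) * (M * (κh * (A * S) ^ 2)) := by
    refine le_trans (norm_sum_le _ _) ?_
    have hterm : ∀ j ∈ I, ‖α k j • (g (x j) - g (x k) - (fderiv ℝ g (x k)) (x j - x k))‖
        ≤ M * (κh * (A * S) ^ 2) := by
      intro j hj
      rw [norm_smul, Real.norm_eq_abs]
      refine mul_le_mul (hMk j hj) ?_ (norm_nonneg _) hM.le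
      refine le_trans (hTay (x j)) ?_
      refine mul_le_mul_of_nonneg_left ?_ hκh.le
      exact pow_le_pow_left₀ (norm_nonneg _) (hdiffk j hj) 2
    refine le_trans (Finset.sum_le_sum hterm) ?_
    rw [Finset.sum_const, nsmul_eq_mul, hcard]
  have hnorm2 : ‖g (x k) - Sg‖ ≤ β' * (κ * ‖W‖) + ((m : ℝ) + 1) * (M * (κh * (A * S) ^ 2)) := by
    rw [hid2]
    refine le_trans (norm_sub_le _ _) (add_le_add ?_ hsumR)
    rw [norm_smul, Real.norm_eq_abs, abs_of_nonneg hβ1.le]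
    exact mul_le_mul_of_nonneg_left (hg1 (x k) W) hβ1.le
  have hnorm1 : ‖w (k + 1)‖ ≤ (1 - β') * ‖W‖ + ‖g (x k) - Sg‖ := by
    rw [hid1]
    refine le_trans (norm_add_le _ _) ?_
    rw [norm_smul, Real.norm_eq_abs, abs_of_nonneg (by linarith : (0:ℝ) ≤ 1 - β')]
  -- final assembly
  have hwk0 : ‖w k‖ ≠ 0 := norm_ne_zero_iff.mpr (hw0 k)
  have hterm1 : ‖W‖ / ‖w k‖ * ((1 - β') + κ * β') * ‖w k‖ = ‖W‖ * ((1 - β') + κ * β') := by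
    field_simp
  have hSQ : S ^ 2 ≤ ((m : ℝ) + 1) * Q := by
    have := sq_sum_le_card_mul_sum_sq (s := Finset.range (m + 1))
      (f := fun j : ℕ => ‖w (k - (j : ℤ))‖)
    rw [Finset.card_range] at this
    rw [hSdef, hQdef]
    push_cast at this ⊢
    exact this
  have hquad : ((m : ℝ) + 1) * (M * (κh * (A * S) ^ 2))
      ≤ (κh * ((m:ℝ)+1)^2 * M * A^2) * Q := by
    calc ((m : ℝ) + 1) * (M * (κh * (A * S) ^ 2))
        = (((m : ℝ) + 1) * M * κh * A ^ 2) * S ^ 2 := by ring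
      _ ≤ (((m : ℝ) + 1) * M * κh * A ^ 2) * (((m : ℝ) + 1) * Q) := by
          refine mul_le_mul_of_nonneg_left hSQ ?_
          have : (0:ℝ) < A ^ 2 := by positivity
          positivity
      _ = (κh * ((m:ℝ)+1)^2 * M * A^2) * Q := by ring
  rw [hterm1]
  have : (1 - β') * ‖W‖ + β' * (κ * ‖W‖) = ‖W‖ * ((1 - β') + κ * β') := by ring
  linarith
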